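/- Let $A,B\in\mathbb{R}^{m\times n}$ with $\mathrm{rank}(A)+\mathrm{rank}(B)=k \le \min\{m,n\}$. Then there exist orthogonal matrices $U\in\mathcal{O}^m$ and $V\in\mathcal{O}^n$ such that $A = U\,\widetilde{\mathrm{Diag}}(\sigma(A))\,V^\top$ and $B = U\begin{bmatrix} B_1 & 0 \\ 0 & 0\end{bmatrix}V^\top$ for some $B_1\in\mathbb{R}^{k\times k}$. -/

import Mathlib

open Matrix Finset

def mdot {m n : ℕ} (A B : Matrix (Fin m) (Fin n) ℝ) : ℝ := ∑ i, ∑ j, A i j * B i j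

noncomputable def frob {m n : ℕ} (A : Matrix (Fin m) (Fin n) ℝ) : ℝ := Real.sqrt (mdot A A)

def IsOrth {k : ℕ} (R : Matrix (Fin k) (Fin k) ℝ) : Prop := Rᵀ * R = 1

def rdg (a b : ℕ) {c : ℕ} (x : Fin c → ℝ) : Matrix (Fin a) (Fin b) ℝ :=
  Matrix.of fun i j => if h : (i : ℕ) = (j : ℕ) ∧ (i : ℕ) < c then x ⟨i, h.2⟩ else 0

noncomputable def descSort {k : ℕ} (f : Fin k → ℝ) : Fin k → ℝ := fun i => f (Tuple.sort f i.rev)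

noncomputable def sigCol {a r : ℕ} (X : Matrix (Fin a) (Fin r) ℝ) : Fin r → ℝ :=
  descSort fun i => Real.sqrt ((show (Xᵀ * X).IsHermitian by
    rw [← Matrix.conjTranspose_eq_transpose_of_trivial]
    exact Matrix.isHermitian_conjTranspose_mul_self X).eigenvalues i)

noncomputable def sigRow {a b : ℕ} (X : Matrix (Fin a) (Fin b) ℝ) : Fin a → ℝ :=
  descSort fun i => Real.sqrt ((Matrix.isHermitian_mul_conjTranspose_self X).eigenvalues i)

noncomputable def toDual {m n : ℕ} (G : Matrix (Fin m) (Fin n) ℝ) :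
    Matrix (Fin m) (Fin n) ℝ →L[ℝ] ℝ :=
  LinearMap.toContinuousLinearMap
    { toFun := fun Y => mdot G Y
      map_add' := fun Y Z => by
        simp [mdot, Matrix.add_apply, mul_add, Finset.sum_add_distrib]
      map_smul' := fun c Y => by
        simp [mdot, Matrix.smul_apply, smul_eq_mul, Finset.mul_sum, mul_left_comm] }

noncomputable def enorm2 {k : ℕ} (v : Fin k → ℝ) : ℝ := Real.sqrt (∑ i, v i ^ 2)

def subdiff {m n : ℕ} (f : Matrix (Fin m) (Fin n) ℝ → ℝ) (X : Matrix (Fin m) (Fin n) ℝ) :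
    Set (Matrix (Fin m) (Fin n) ℝ) := {G | ∀ Y, f X + mdot G (Y - X) ≤ f Y}

namespace SBD
local notation "⟪" x ", " y "⟫" => inner (𝕜 := ℝ) x y

lemma dot_inner {d : ℕ} (x y : EuclideanSpace ℝ (Fin d)) : x ⬝ᵥ y = ⟪x, y⟫ := by
  simp [PiLp.inner_apply, RCLike.inner_apply, starRingEnd_apply, dotProduct, mul_comm]

lemma descSort_sqrt {m : ℕ} (μ : Fin m → ℝ) (i : Fin m) :
    descSort (fun j => Real.sqrt (μ j)) i = Real.sqrt (μ (Tuple.sort μ i.rev)) := by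
  have h1 : Monotone ((fun j => Real.sqrt (μ j)) ∘ Tuple.sort μ) := by
    have : Monotone Real.sqrt := fun a b h => Real.sqrt_le_sqrt h
    exact this.comp (Tuple.monotone_sort μ)
  have h2 := Tuple.monotone_sort (fun j => Real.sqrt (μ j))
  have := Tuple.unique_monotone (f := fun j => Real.sqrt (μ j)) h2 h1
  exact congrFun this i.rev

lemma lt_card_iff_ne_zero {m : ℕ} {ν : Fin m → ℝ} (hanti : Antitone ν) (hnn : ∀ i, 0 ≤ ν i)
    (j : Fin m) : (j : ℕ) < Fintype.card {i // ν i ≠ 0} ↔ ν j ≠ 0 := by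
  classical
  rw [Fintype.card_subtype]
  constructor
  · intro hj hzero
    have hsub : univ.filter (fun i => ν i ≠ 0) ⊆ Finset.Iio j := by
      intro i hi
      simp only [mem_filter] at hi
      rw [Finset.mem_Iio]
      by_contra hle
      have hji : j ≤ i := not_lt.mp hle
      have h2 : ν i ≤ 0 := hzero ▸ hanti hji
      exact hi.2 (le_antisymm h2 (hnn i))
    have hc := Finset.card_le_card hsub
    rw [Fin.card_Iio] at hc
    omega
  · intro hj
    have hsub : Finset.Iic j ⊆ univ.filter (fun i => ν i ≠ 0) := by
      intro i hi
      rw [Finset.mem_Iic] at hi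
      refine mem_filter.mpr ⟨mem_univ _, fun h0 => hj ?_⟩
      exact le_antisymm (h0 ▸ hanti hi) (hnn j)
    have hc := Finset.card_le_card hsub
    rw [Fin.card_Iic] at hc
    omega

lemma colMatrix_isOrth {d : ℕ} {e : Fin d → EuclideanSpace ℝ (Fin d)} (he : Orthonormal ℝ e) :
    IsOrth (Matrix.of fun i j => e j i) := by
  have h := orthonormal_iff_ite.mp he
  show _ = _
  ext i j
  have h2 : (∑ l, e i l * e j l) = if i = j then (1:ℝ) else 0 := by
    have h3 := dot_inner (e i) (e j)
    rw [dotProduct] at h3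
    rw [h3, h i j]
  simpa [Matrix.mul_apply, Matrix.one_apply] using h2

lemma dot_shift {m n : ℕ} (M : Matrix (Fin m) (Fin n) ℝ) (x : Fin m → ℝ) (y : Fin n → ℝ) :
    (Mᵀ *ᵥ x) ⬝ᵥ y = x ⬝ᵥ (M *ᵥ y) := by
  rw [Matrix.mulVec_transpose, Matrix.dotProduct_mulVec]

lemma sandwich {m n : ℕ} (U : Matrix (Fin m) (Fin m) ℝ) (V : Matrix (Fin n) (Fin n) ℝ)
    (hU : IsOrth U) (hV : IsOrth V) (M : Matrix (Fin m) (Fin n) ℝ) :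
    M = U * (Uᵀ * M * V) * Vᵀ := by
  have hU' : U * Uᵀ = 1 := mul_eq_one_comm.mp hU
  have hV' : V * Vᵀ = 1 := mul_eq_one_comm.mp hV
  calc M = (U * Uᵀ) * M * (V * Vᵀ) := by rw [hU', hV', Matrix.one_mul, Matrix.mul_one]
    _ = U * (Uᵀ * M * V) * Vᵀ := by simp only [Matrix.mul_assoc]

lemma entry_eq {m n : ℕ} (M : Matrix (Fin m) (Fin n) ℝ) (eU : Fin m → EuclideanSpace ℝ (Fin m))
    (eV : Fin n → EuclideanSpace ℝ (Fin n)) (i : Fin m) (j : Fin n) :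
    ((Matrix.of fun a b => eU b a)ᵀ * M * (Matrix.of fun a b => eV b a)) i j
      = (Mᵀ *ᵥ eU i) ⬝ᵥ eV j := by
  simp only [Matrix.mul_apply, Matrix.transpose_apply, Matrix.of_apply, Matrix.mulVec,
    dotProduct, Finset.sum_mul, Finset.mul_sum]
  apply Finset.sum_congr rfl
  intro x _
  apply Finset.sum_congr rfl
  intro y _
  ring

lemma extBasis {d r k : ℕ} (hrk : r ≤ k) (hkd : k ≤ d)
    (w : Fin r → EuclideanSpace ℝ (Fin d)) (hw : Orthonormal ℝ w)
    (S : Submodule ℝ (EuclideanSpace ℝ (Fin d))) (hwS : ∀ i, w i ∈ S)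
    (hdim : Module.finrank ℝ S ≤ k) :
    ∃ e : Fin d → EuclideanSpace ℝ (Fin d), Orthonormal ℝ e ∧
      (∀ i : Fin r, e (Fin.castLE (hrk.trans hkd) i) = w i) ∧
      ∀ i : Fin d, k ≤ (i : ℕ) → e i ∈ Sᗮ := by
  classical
  have hcard : d - k ≤ Module.finrank ℝ Sᗮ := by
    have h1 := Submodule.finrank_add_finrank_orthogonal (K := S)
    have hE : Module.finrank ℝ (EuclideanSpace ℝ (Fin d)) = d := finrank_euclideanSpace_fin
    omega
  set p := stdOrthonormalBasis ℝ Sᗮ with hp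
  set v : Fin d → EuclideanSpace ℝ (Fin d) := fun i =>
    if h : (i : ℕ) < r then w ⟨i, h⟩
    else if h2 : (i : ℕ) - k < Module.finrank ℝ Sᗮ then (p ⟨(i : ℕ) - k, h2⟩ : EuclideanSpace ℝ (Fin d)) else 0
    with hv
  set s : Set (Fin d) := {i | (i : ℕ) < r ∨ k ≤ (i : ℕ)} with hs
  have hvw : ∀ (i : Fin d) (h : (i:ℕ) < r), v i = w ⟨i, h⟩ := fun i h => dif_pos h
  have hvp : ∀ (i : Fin d) (h : k ≤ (i:ℕ)),
      v i = (p ⟨(i:ℕ) - k, by omega⟩ : EuclideanSpace ℝ (Fin d)) := by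
    intro i h
    have hnr : ¬ (i:ℕ) < r := by omega
    have h2 : (i:ℕ) - k < Module.finrank ℝ Sᗮ := by
      have := i.isLt; omega
    simp only [hv, dif_neg hnr, dif_pos h2]
  have hvS : ∀ (i : Fin d), (i:ℕ) < r → v i ∈ S := by
    intro i h; rw [hvw i h]; exact hwS _
  have hvSo : ∀ (i : Fin d), k ≤ (i:ℕ) → v i ∈ Sᗮ := by
    intro i h; rw [hvp i h]; exact Submodule.coe_mem _
  have hon : Orthonormal ℝ (s.restrict v) := by
    rw [orthonormal_iff_ite]
    rintro ⟨i, hi⟩ ⟨j, hj⟩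
    have key : ∀ (a b : Fin d), a ∈ s → b ∈ s → a ≠ b → ⟪v a, v b⟫ = 0 := by
      intro a b ha hb hab
      rcases ha with ha | ha <;> rcases hb with hb | hb
      · rw [hvw a ha, hvw b hb]
        have := orthonormal_iff_ite.mp hw ⟨a, ha⟩ ⟨b, hb⟩
        rw [this, if_neg (by simp [Fin.ext_iff]; exact fun h => hab (Fin.ext h))]
      · rw [hvw a ha]
        exact Submodule.inner_right_of_mem_orthogonal (hwS _) (hvSo b hb)
      · rw [hvw b hb]
        exact Submodule.inner_left_of_mem_orthogonal (hwS _) (hvSo a ha)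
      · rw [hvp a ha, hvp b hb]
        have := orthonormal_iff_ite.mp (p.orthonormal) ⟨(a:ℕ) - k, by have := a.isLt; omega⟩
          ⟨(b:ℕ) - k, by have := b.isLt; omega⟩
        rw [Submodule.coe_inner] at this
        rw [this, if_neg]
        intro hcon
        apply hab
        have : (a:ℕ) - k = (b:ℕ) - k := by simpa [Fin.ext_iff] using hcon
        have := a.isLt; have := b.isLt
        exact Fin.ext (by omega)
    by_cases hij : (⟨i, hi⟩ : s) = ⟨j, hj⟩
    · rw [if_pos hij]
      cases Subtype.ext_iff.mp hij
      rcases hi with h | h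
      · show ⟪v i, v i⟫ = 1
        rw [hvw i h]
        exact orthonormal_iff_ite.mp hw ⟨i, h⟩ ⟨i, h⟩ |>.trans (if_pos rfl)
      · show ⟪v i, v i⟫ = 1
        rw [hvp i h]
        have := orthonormal_iff_ite.mp (p.orthonormal) ⟨(i:ℕ) - k, by have := i.isLt; omega⟩
          ⟨(i:ℕ) - k, by have := i.isLt; omega⟩
        rw [Submodule.coe_inner] at this
        rw [this, if_pos rfl]
    · rw [if_neg hij]
      exact key i j hi hj (fun h => hij (Subtype.ext h))
  obtain ⟨b, hb⟩ := hon.exists_orthonormalBasis_extension_of_card_eq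
    (by simp [finrank_euclideanSpace_fin])
  refine ⟨⇑b, b.orthonormal, ?_, ?_⟩
  · intro i
    have hmem : (Fin.castLE (hrk.trans hkd) i) ∈ s := Or.inl i.isLt
    rw [hb _ hmem, hvw _ i.isLt]
    exact congrArg w (Fin.ext rfl)
  · intro i hi
    have hmem : i ∈ s := Or.inr hi
    rw [hb _ hmem]
    exact hvSo i hi

end SBD

open SBD

local notation "⟪" x ", " y "⟫" => inner (𝕜 := ℝ) x y

theorem simultaneous_block_decomposition (m n k : ℕ) (hk : k ≤ min m n)
    (A B : Matrix (Fin m) (Fin n) ℝ) (hrk : A.rank + B.rank = k) :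
    ∃ (U : Matrix (Fin m) (Fin m) ℝ) (V : Matrix (Fin n) (Fin n) ℝ),
      IsOrth U ∧ IsOrth V ∧
      A = U * rdg m n (sigRow A) * Vᵀ ∧
      ∃ B1 : Matrix (Fin k) (Fin k) ℝ,
        B = U * (Matrix.of fun (i : Fin m) (j : Fin n) =>
              if hij : (i : ℕ) < k ∧ (j : ℕ) < k then B1 ⟨i, hij.1⟩ ⟨j, hij.2⟩ else 0) * Vᵀ := by
  classical
  have hkm : k ≤ m := hk.trans (min_le_left _ _)
  have hkn : k ≤ n := hk.trans (min_le_right _ _)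
  set r := A.rank with hrdef
  have hrk' : r ≤ k := by omega
  have hrm : r ≤ m := hrk'.trans hkm
  have hrn : r ≤ n := hrk'.trans hkn
  -- spectral data for A * Aᴴ
  have hH : (A * Aᴴ).IsHermitian := Matrix.isHermitian_mul_conjTranspose_self A
  set μ := hH.eigenvalues with hμdef
  set b := hH.eigenvectorBasis with hbdef
  set g : Equiv.Perm (Fin m) := Equiv.trans (Fin.revPerm) (Tuple.sort μ) with hgdef
  set u : Fin m → EuclideanSpace ℝ (Fin m) := fun i => b (g i) with hudef
  set ν : Fin m → ℝ := fun i => μ (g i) with hνdef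
  have hAH : Aᴴ = Aᵀ := by ext i j; simp [Matrix.conjTranspose_apply]
  have hup : Orthonormal ℝ u := b.orthonormal.comp g g.injective
  have hνnn : ∀ i, 0 ≤ ν i := fun i =>
    (Matrix.posSemidef_self_mul_conjTranspose A).eigenvalues_nonneg (g i)
  have hanti : Antitone ν := by
    intro a c hac
    have h1 : c.rev ≤ a.rev := by
      rw [Fin.rev_le_rev]; exact hac
    exact Tuple.monotone_sort μ h1
  have hsig : ∀ i, sigRow A i = Real.sqrt (ν i) := fun i => descSort_sqrt μ i
  -- rank characterization
  have hlt : ∀ i : Fin m, ((i : ℕ) < r ↔ ν i ≠ 0) := by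
    have hrankcard : Fintype.card {i // ν i ≠ 0} = r := by
      have h1 : (A * Aᴴ).rank = A.rank := A.rank_self_mul_conjTranspose
      have h2 := hH.rank_eq_card_non_zero_eigs
      have h3 : Fintype.card {i // ν i ≠ 0} = Fintype.card {i // μ i ≠ 0} :=
        Fintype.card_congr (Equiv.subtypeEquiv g (fun i => Iff.rfl))
      rw [h3, ← h2, h1]
    intro i
    rw [← hrankcard]
    exact lt_card_iff_ne_zero hanti hνnn i
  -- eigen-equation
  have heig : ∀ i, (A * Aᴴ) *ᵥ (u i) = ν i • (u i) := fun i => hH.mulVec_eigenvectorBasis (g i)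
  have hdotuu : ∀ i j, u i ⬝ᵥ u j = if i = j then (1:ℝ) else 0 := by
    intro i j
    rw [dot_inner]
    exact orthonormal_iff_ite.mp hup i j
  have hAATdot : ∀ i j, (Aᵀ *ᵥ u i) ⬝ᵥ (Aᵀ *ᵥ u j) = if i = j then ν j else 0 := by
    intro i j
    have h1 : (Aᵀ *ᵥ u i) ⬝ᵥ (Aᵀ *ᵥ u j) = u i ⬝ᵥ ((A * Aᴴ) *ᵥ u j) := by
      rw [dot_shift A (u i) (Aᵀ *ᵥ u j), Matrix.mulVec_mulVec, hAH]
    rw [h1, heig j, dotProduct_smul, hdotuu i j]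
    simp only [smul_eq_mul]
    split_ifs <;> ring
  have hAAT0 : ∀ i : Fin m, r ≤ (i : ℕ) → Aᵀ *ᵥ u i = 0 := by
    intro i hi
    have h0 : ν i = 0 := by
      by_contra h
      have := (hlt i).mpr h
      omega
    have hdd := hAATdot i i
    rw [if_pos rfl, h0] at hdd
    funext l
    have hz := (Finset.sum_eq_zero_iff_of_nonneg
      (fun l _ => mul_self_nonneg ((Aᵀ *ᵥ u i) l))).mp hdd l (mem_univ l)
    exact mul_self_eq_zero.mp hz
  -- singular values and right singular vectors
  set σ : Fin m → ℝ := fun i => Real.sqrt (ν i) with hσdef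
  have hσnn : ∀ i, 0 ≤ σ i := fun i => Real.sqrt_nonneg _
  have hσsq : ∀ i, σ i * σ i = ν i := fun i => Real.mul_self_sqrt (hνnn i)
  have hσne : ∀ i : Fin m, (i : ℕ) < r → σ i ≠ 0 := by
    intro i hi h0
    have : ν i = 0 := by rw [← hσsq i, h0, mul_zero]
    exact (hlt i).mp hi this
  have hσzero : ∀ i : Fin m, r ≤ (i : ℕ) → σ i = 0 := by
    intro i hi
    have : ν i = 0 := by
      by_contra h
      have := (hlt i).mpr h
      omega
    rw [hσdef]; simp [this]
  set w : Fin r → EuclideanSpace ℝ (Fin n) :=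
    fun i => WithLp.toLp 2 ((σ (Fin.castLE hrm i))⁻¹ • (Aᵀ *ᵥ u (Fin.castLE hrm i))) with hwdef
  have hkey : ∀ i : Fin r, Aᵀ *ᵥ u (Fin.castLE hrm i) = σ (Fin.castLE hrm i) • w i := by
    intro i
    rw [hwdef]
    simp only [WithLp.ofLp_smul, WithLp.ofLp_toLp, smul_smul]
    rw [mul_inv_cancel₀ (hσne _ i.isLt), one_smul]
  have hworth : Orthonormal ℝ w := by
    rw [orthonormal_iff_ite]
    intro i j
    rw [← dot_inner, hwdef]
    simp only [WithLp.ofLp_toLp, smul_dotProduct, dotProduct_smul, smul_eq_mul]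
    rw [hAATdot]
    by_cases hij : i = j
    · subst hij
      rw [if_pos rfl, if_pos rfl]
      have h1 := hσsq (Fin.castLE hrm i)
      have h2 := hσne (Fin.castLE hrm i) i.isLt
      field_simp
      nlinarith [hσsq (Fin.castLE hrm i)]
    · rw [if_neg (fun h => hij (Fin.castLE_injective hrm h)), if_neg hij]
      ring
  -- subspaces
  have honU : Orthonormal ℝ (fun i : Fin r => u (Fin.castLE hrm i)) :=
    hup.comp _ (Fin.castLE_injective hrm)
  set SU : Submodule ℝ (EuclideanSpace ℝ (Fin m)) :=
    (Submodule.span ℝ (Set.range (fun i => u (Fin.castLE hrm i)))) ⊔ (LinearMap.range B.mulVecLin).comap (WithLp.linearEquiv 2 ℝ (Fin m → ℝ)).toLinearMap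
    with hSUdef
  set SV : Submodule ℝ (EuclideanSpace ℝ (Fin n)) :=
    (Submodule.span ℝ (Set.range w)) ⊔ (LinearMap.range Bᵀ.mulVecLin).comap (WithLp.linearEquiv 2 ℝ (Fin n → ℝ)).toLinearMap with hSVdef
  have hdimU : Module.finrank ℝ SU ≤ k := by
    refine (Submodule.finrank_add_le_finrank_add_finrank _ _).trans ?_
    have h1 : Module.finrank ℝ (Submodule.span ℝ (Set.range (fun i => u (Fin.castLE hrm i)))) = r := by
      rw [finrank_span_eq_card honU.linearIndependent]
      simp
    have h2 : Module.finrank ℝ ((LinearMap.range B.mulVecLin).comap (WithLp.linearEquiv 2 ℝ (Fin m → ℝ)).toLinearMap) = B.rank := by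
      rw [Submodule.comap_equiv_eq_map_symm, LinearEquiv.finrank_map_eq]; rfl
    rw [h1, h2]
    omega
  have hdimV : Module.finrank ℝ SV ≤ k := by
    refine (Submodule.finrank_add_le_finrank_add_finrank _ _).trans ?_
    have h1 : Module.finrank ℝ (Submodule.span ℝ (Set.range w)) = r := by
      rw [finrank_span_eq_card hworth.linearIndependent]
      simp
    have h2 : Module.finrank ℝ ((LinearMap.range Bᵀ.mulVecLin).comap (WithLp.linearEquiv 2 ℝ (Fin n → ℝ)).toLinearMap) = Bᵀ.rank := by
      rw [Submodule.comap_equiv_eq_map_symm, LinearEquiv.finrank_map_eq]; rfl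
    rw [h1, h2, Matrix.rank_transpose]
    omega
  obtain ⟨eU, heUon, heUeq, heUperp⟩ := extBasis hrk' hkm (fun i => u (Fin.castLE hrm i))
    honU SU
    (fun i => Submodule.mem_sup_left (Submodule.subset_span ⟨i, rfl⟩)) hdimU
  obtain ⟨eV, heVon, heVeq, heVperp⟩ := extBasis hrk' hkn w hworth SV
    (fun i => Submodule.mem_sup_left (Submodule.subset_span ⟨i, rfl⟩)) hdimV
  have heUu : ∀ (i : Fin m) (h : (i:ℕ) < r), eU i = u i := fun i h => heUeq ⟨(i:ℕ), h⟩
  -- kernel property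
  have hkerU : ∀ i : Fin m, r ≤ (i : ℕ) → Aᵀ *ᵥ eU i = 0 := by
    intro i hi
    have hx : ∀ j : Fin m, (j : ℕ) < r → ⟪u j, eU i⟫ = 0 := by
      intro j hj
      have h1 : eU (Fin.castLE (hrk'.trans hkm) ⟨(j:ℕ), hj⟩) = u j := heUeq ⟨(j:ℕ), hj⟩
      rw [← h1]
      have := orthonormal_iff_ite.mp heUon (Fin.castLE (hrk'.trans hkm) ⟨(j:ℕ), hj⟩) i
      rw [this, if_neg]
      intro hcon
      have : (j : ℕ) = (i : ℕ) := congrArg Fin.val hcon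
      omega
    have hxsum : eU i = ∑ j, ⟪u j, eU i⟫ • u j := by
      have h1 : ∑ j, ⟪b j, eU i⟫ • b j = eU i := by
        have := b.sum_repr' (eU i)
        simpa [OrthonormalBasis.repr_apply_apply] using this
      calc eU i = ∑ j, ⟪b j, eU i⟫ • b j := h1.symm
        _ = ∑ j, ⟪u j, eU i⟫ • u j := (Equiv.sum_comp g (fun j => ⟪b j, eU i⟫ • b j)).symm
    calc Aᵀ *ᵥ eU i = Aᵀ.mulVecLin (∑ j, ⟪u j, eU i⟫ • u j) := by
          nth_rw 1 [hxsum]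
          simp only [WithLp.ofLp_sum, WithLp.ofLp_smul]; rfl
      _ = ∑ j, ⟪u j, eU i⟫ • (Aᵀ *ᵥ u j) := by
          rw [map_sum]
          exact Finset.sum_congr rfl fun j _ => by rw [LinearMap.map_smul]; rfl
      _ = 0 := by
          apply Finset.sum_eq_zero
          intro j _
          by_cases hj : (j : ℕ) < r
          · rw [hx j hj, zero_smul]
          · rw [hAAT0 j (not_lt.mp hj), smul_zero]
  -- the diagonal identity
  have hDiag : (Matrix.of fun a c => eU c a)ᵀ * A * (Matrix.of fun a c => eV c a)
      = rdg m n (sigRow A) := by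
    ext i j
    rw [entry_eq]
    by_cases hi : (i : ℕ) < r
    · have h1 : Aᵀ *ᵥ eU i = σ i • w ⟨(i:ℕ), hi⟩ := by
        rw [heUu i hi]
        have := hkey ⟨(i:ℕ), hi⟩
        rwa [show Fin.castLE hrm ⟨(i:ℕ), hi⟩ = i from Fin.ext rfl] at this
      have h2 : w ⟨(i:ℕ), hi⟩ = eV (Fin.castLE (hrk'.trans hkn) ⟨(i:ℕ), hi⟩) :=
        (heVeq ⟨(i:ℕ), hi⟩).symm
      rw [h1, smul_dotProduct, h2, dot_inner,
        orthonormal_iff_ite.mp heVon (Fin.castLE (hrk'.trans hkn) ⟨(i:ℕ), hi⟩) j]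
      have hcast : (Fin.castLE (hrk'.trans hkn) ⟨(i:ℕ), hi⟩ = j) ↔ ((i:ℕ) = (j:ℕ)) := by
        rw [Fin.ext_iff]; rfl
      simp only [rdg, Matrix.of_apply, smul_eq_mul]
      by_cases hij : (i : ℕ) = (j : ℕ)
      · rw [if_pos (hcast.mpr hij), dif_pos ⟨hij, i.isLt⟩, mul_one, hsig]
      · rw [if_neg (fun h => hij (hcast.mp h)), dif_neg (fun h => hij h.1), mul_zero]
    · rw [hkerU i (not_lt.mp hi), zero_dotProduct]
      simp only [rdg, Matrix.of_apply]
      by_cases hij : (i : ℕ) = (j : ℕ)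
      · rw [dif_pos ⟨hij, i.isLt⟩, hsig]
        have : σ ⟨(i:ℕ), i.isLt⟩ = 0 := hσzero _ (not_lt.mp hi)
        rw [← this]
      · rw [dif_neg (fun h => hij h.1)]
  refine ⟨Matrix.of fun a c => eU c a, Matrix.of fun a c => eV c a,
    colMatrix_isOrth heUon, colMatrix_isOrth heVon, ?_, ?_⟩
  · have := sandwich _ _ (colMatrix_isOrth heUon) (colMatrix_isOrth heVon) A
    rw [hDiag] at this
    exact this
  · set C := (Matrix.of fun a c => eU c a)ᵀ * B * (Matrix.of fun a c => eV c a) with hCdef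
    refine ⟨Matrix.of fun i j => C ⟨(i:ℕ), lt_of_lt_of_le i.isLt hkm⟩ ⟨(j:ℕ), lt_of_lt_of_le j.isLt hkn⟩, ?_⟩
    have hpad : (Matrix.of fun (i : Fin m) (j : Fin n) =>
        if hij : (i : ℕ) < k ∧ (j : ℕ) < k then
          (Matrix.of fun (a : Fin k) (c : Fin k) =>
            C ⟨(a:ℕ), lt_of_lt_of_le a.isLt hkm⟩ ⟨(c:ℕ), lt_of_lt_of_le c.isLt hkn⟩)
            ⟨i, hij.1⟩ ⟨j, hij.2⟩ else 0) = C := by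
      ext i j
      by_cases hij : (i : ℕ) < k ∧ (j : ℕ) < k
      · simp only [Matrix.of_apply, dif_pos hij]
      · simp only [Matrix.of_apply, dif_neg hij]
        symm
        rw [hCdef, entry_eq]
        rcases not_and_or.mp hij with hik | hjk
        · have h1 : (Bᵀ *ᵥ eU i) ⬝ᵥ eV j = eU i ⬝ᵥ (B *ᵥ eV j) := dot_shift B _ _
          rw [h1]
          refine (dot_inner (eU i) (WithLp.toLp 2 (B *ᵥ eV j))).trans ?_
          exact Submodule.inner_left_of_mem_orthogonal
            (Submodule.mem_sup_right (LinearMap.mem_range_self B.mulVecLin (eV j))) (heUperp i (not_lt.mp hik))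
        · refine (dot_inner (WithLp.toLp 2 (Bᵀ *ᵥ eU i)) (eV j)).trans ?_
          exact Submodule.inner_right_of_mem_orthogonal
            (Submodule.mem_sup_right (LinearMap.mem_range_self Bᵀ.mulVecLin (eU i))) (heVperp j (not_lt.mp hjk))
    rw [hpad]
    exact sandwich _ _ (colMatrix_isOrth heUon) (colMatrix_isOrth heVon) B
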